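/- Let τ be an infinite cardinal and let X = Z ⊕ (⊕{X_α : α ∈ A}) be the topological sum, where |A| = τ, each X_α is an a_τ-space with |X_α| > τ, and Z is a compact Hausdorff space. Then X is almost a_τ-subcompact, i.e., for every S ⊆ X with |S| ≤ τ there is a condensation from X \ S onto a compact Hausdorff space. -/

import Mathlib

open Cardinal Topology

universe u

/-- A Hausdorff space is *subcompact* if it admits a condensation (continuous bijection)
onto a compact Hausdorff space. -/
def Subcompact (X : Type u) [TopologicalSpace X] : Prop :=
  ∃ (Y : Type u) (_ : TopologicalSpace Y), CompactSpace Y ∧ T2Space Y ∧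
    ∃ f : X → Y, Continuous f ∧ Function.Bijective f

/-- A compact Hausdorff space `X` is an `a_τ`-space if for every `C ⊆ X` with `#C ≤ τ`
there is a condensation from the subspace `X \ C` onto a compact Hausdorff space. -/
def ATauSpace (τ : Cardinal.{u}) (X : Type u) [TopologicalSpace X] : Prop :=
  CompactSpace X ∧ T2Space X ∧ ∀ C : Set X, #C ≤ τ → Subcompact ↥(Cᶜ)

/-- A compact Hausdorff space `X` is a strictly `a_τ`-space if for every `C ⊆ X` with
`#C ≤ τ` there is a condensation from `X \ C` onto a compact Hausdorff space `K`
extending to a continuous map `X → K` (encoded: a continuous `g : X → K` whose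
restriction to `X \ C` is bijective). -/
def StrictATauSpace (τ : Cardinal.{u}) (X : Type u) [TopologicalSpace X] : Prop :=
  CompactSpace X ∧ T2Space X ∧ ∀ C : Set X, #C ≤ τ →
    ∃ (K : Type u) (_ : TopologicalSpace K), CompactSpace K ∧ T2Space K ∧
      ∃ g : X → K, Continuous g ∧ Function.Bijective fun x : ↥(Cᶜ) => g x

/-- A Hausdorff space `X` is `a_τ`-subcompact if for every `C ⊆ X` with `#C ≤ τ` there
is a condensation from `X \ C` onto an `a_τ`-space. -/
def ATauSubcompact (τ : Cardinal.{u}) (X : Type u) [TopologicalSpace X] : Prop :=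
  ∀ C : Set X, #C ≤ τ →
    ∃ (Y : Type u) (_ : TopologicalSpace Y), ATauSpace τ Y ∧
      ∃ f : ↥(Cᶜ) → Y, Continuous f ∧ Function.Bijective f

/-- A Hausdorff space `X` is strictly `a_τ`-subcompact if for every `C ⊆ X` with `#C ≤ τ`
there is a condensation from `X \ C` onto a strictly `a_τ`-space `Y` extending to a
continuous map `X → Y`. -/
def StrictATauSubcompact (τ : Cardinal.{u}) (X : Type u) [TopologicalSpace X] : Prop :=
  ∀ C : Set X, #C ≤ τ →
    ∃ (Y : Type u) (_ : TopologicalSpace Y), StrictATauSpace τ Y ∧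
      ∃ g : X → Y, Continuous g ∧ Function.Bijective fun x : ↥(Cᶜ) => g x

/-- A Hausdorff space `X` is almost strictly `a_τ`-subcompact if for every `C ⊆ X` with
`#C ≤ τ` there is a condensation from `X \ C` onto a compact Hausdorff space `Y`
extending to a continuous map `X → Y`. -/
def AlmostStrictATauSubcompact (τ : Cardinal.{u}) (X : Type u) [TopologicalSpace X] : Prop :=
  ∀ C : Set X, #C ≤ τ →
    ∃ (Y : Type u) (_ : TopologicalSpace Y), CompactSpace Y ∧ T2Space Y ∧
      ∃ g : X → Y, Continuous g ∧ Function.Bijective fun x : ↥(Cᶜ) => g x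


open scoped Classical

section AuxTag

open OnePoint

variable {Z A : Type u}

/-- Tagging map used in the construction for `stmt_5`. -/
noncomputable def auxTag (SZ : Set Z) (j : (↥SZ ⊕ PUnit.{u+1}) ↪ A) (a : A) :
    Z ⊕ OnePoint A :=
  if h : ∃ w, j w = a then
    Sum.elim (fun s : ↥SZ => (Sum.inl s.1 : Z ⊕ OnePoint A)) (fun _ => Sum.inr ∞) h.choose
  else Sum.inr (↑a : OnePoint A)

theorem auxTag_j (SZ : Set Z) (j : (↥SZ ⊕ PUnit.{u+1}) ↪ A) (w : ↥SZ ⊕ PUnit.{u+1}) :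
    auxTag SZ j (j w) =
      Sum.elim (fun s : ↥SZ => (Sum.inl s.1 : Z ⊕ OnePoint A)) (fun _ => Sum.inr ∞) w := by
  have h : ∃ w', j w' = j w := ⟨w, rfl⟩
  rw [auxTag, dif_pos h]
  congr 1
  exact j.injective h.choose_spec

theorem auxTag_not (SZ : Set Z) (j : (↥SZ ⊕ PUnit.{u+1}) ↪ A) {a : A}
    (h : ¬ ∃ w, j w = a) : auxTag SZ j a = Sum.inr (↑a : OnePoint A) := by
  rw [auxTag, dif_neg h]

theorem auxTag_ne_inl (SZ : Set Z) (j : (↥SZ ⊕ PUnit.{u+1}) ↪ A) {z : Z} (hz : z ∉ SZ)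
    (a : A) : auxTag SZ j a ≠ Sum.inl z := by
  by_cases h : ∃ w, j w = a
  · obtain ⟨w, rfl⟩ := h
    rw [auxTag_j]
    rcases w with s | p
    · simp only [Sum.elim_inl, ne_eq, Sum.inl.injEq]
      rintro rfl; exact hz s.2
    · simp
  · rw [auxTag_not _ _ h]; simp

theorem auxTag_ne_inr_coe (SZ : Set Z) (j : (↥SZ ⊕ PUnit.{u+1}) ↪ A) {β : A}
    (hβ : ∃ w, j w = β) (a : A) : auxTag SZ j a ≠ Sum.inr (↑β : OnePoint A) := by
  by_cases h : ∃ w, j w = a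
  · obtain ⟨w, rfl⟩ := h
    rw [auxTag_j]
    rcases w with s | p
    · simp
    · simp only [Sum.elim_inr, ne_eq, Sum.inr.injEq]
      exact OnePoint.infty_ne_coe β
  · rw [auxTag_not _ _ h]
    simp only [ne_eq, Sum.inr.injEq]
    intro hc
    exact h (by rwa [OnePoint.coe_eq_coe.mp hc])

theorem auxTag_injective (SZ : Set Z) (j : (↥SZ ⊕ PUnit.{u+1}) ↪ A) :
    Function.Injective (auxTag SZ j) := by
  intro a a' h
  by_cases ha : ∃ w, j w = a
  · obtain ⟨w, rfl⟩ := ha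
    by_cases ha' : ∃ w', j w' = a'
    · obtain ⟨w', rfl⟩ := ha'
      rw [auxTag_j, auxTag_j] at h
      congr 1
      rcases w with s | p <;> rcases w' with s' | p'
      · simp only [Sum.elim_inl, Sum.inl.injEq] at h
        exact congrArg Sum.inl (Subtype.ext h)
      · simp at h
      · simp at h
      · exact congrArg Sum.inr (Subsingleton.elim p p')
    · rw [auxTag_not _ _ ha', auxTag_j] at h
      rcases w with s | p
      · simp at h
      · exact absurd (Sum.inr.inj h) (OnePoint.infty_ne_coe a')
  · by_cases ha' : ∃ w', j w' = a'
    · obtain ⟨w', rfl⟩ := ha'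
      rw [auxTag_not _ _ ha, auxTag_j] at h
      rcases w' with s' | p'
      · simp at h
      · exact absurd (Sum.inr.inj h).symm (OnePoint.infty_ne_coe a)
    · rw [auxTag_not _ _ ha, auxTag_not _ _ ha'] at h
      exact OnePoint.coe_eq_coe.mp (Sum.inr.inj h)

theorem auxTag_classify (SZ : Set Z) (j : (↥SZ ⊕ PUnit.{u+1}) ↪ A) (u : Z ⊕ OnePoint A) :
    (∃ z : ↥(SZᶜ), u = Sum.inl z.1) ∨ (∃ a, u = auxTag SZ j a) ∨
      (∃ β : A, u = Sum.inr (↑β : OnePoint A) ∧ ∃ w, j w = β) := by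
  rcases u with z | ω
  · by_cases hz : z ∈ SZ
    · refine Or.inr (Or.inl ⟨j (Sum.inl ⟨z, hz⟩), ?_⟩)
      rw [auxTag_j, Sum.elim_inl]
    · exact Or.inl ⟨⟨z, hz⟩, rfl⟩
  · rcases ω with _ | β
    · refine Or.inr (Or.inl ⟨j (Sum.inr PUnit.unit), ?_⟩)
      rw [auxTag_j, Sum.elim_inr]; rfl
    · by_cases hβ : ∃ w, j w = β
      · exact Or.inr (Or.inr ⟨β, rfl, hβ⟩)
      · exact Or.inr (Or.inl ⟨β, (auxTag_not _ _ hβ).symm⟩)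

end AuxTag
open OnePoint in
/-- Key construction: the disjoint sum of `Z` minus a small set with blocks condensing onto
compacta condenses onto a compact Hausdorff space. -/
theorem aux_condense {Z A : Type u} [TopologicalSpace Z] [CompactSpace Z] [T2Space Z]
    (SZ : Set Z) (DA : A → Type u) [∀ a, TopologicalSpace (DA a)]
    (K : A → Type u) [∀ a, TopologicalSpace (K a)]
    [∀ a, CompactSpace (K a)] [∀ a, T2Space (K a)]
    (g : ∀ a, DA a → K a) (gc : ∀ a, Continuous (g a)) (gb : ∀ a, Function.Bijective (g a))
    (x₀ : ∀ a, DA a) (j : (↥SZ ⊕ PUnit.{u+1}) ↪ A) :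
    ∃ (W : Type u) (_ : TopologicalSpace W), CompactSpace W ∧ T2Space W ∧
      ∃ f : (↥(SZᶜ) ⊕ (Σ a, DA a)) → W, Continuous f ∧ Function.Bijective f := by
  classical
  letI : TopologicalSpace A := ⊥
  haveI : DiscreteTopology A := ⟨rfl⟩
  set m₀ : ∀ γ, K γ := fun γ => g γ (x₀ γ) with hm₀
  set Q : ∀ a, DA a → ∀ γ, K γ := fun a x => Function.update m₀ a (g a x) with hQ
  set tg : A → Z ⊕ OnePoint A := auxTag SZ j with htg
  set F : (↥(SZᶜ) ⊕ (Σ a, DA a)) → (Z ⊕ OnePoint A) × (∀ γ, K γ) :=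
    Sum.elim (fun z => (Sum.inl z.1, m₀)) (fun q => (tg q.1, Q q.1 q.2)) with hF
  have hQself : ∀ a x, Q a x a = g a x := fun a x => Function.update_self a _ m₀
  have hQother : ∀ a x γ, γ ≠ a → Q a x γ = m₀ γ := fun a x γ hγ =>
    Function.update_of_ne hγ _ m₀
  have hQx₀ : ∀ a, Q a (x₀ a) = m₀ := by
    intro a; funext γ
    by_cases hγ : γ = a
    · subst hγ; rw [hQself]
    · rw [hQother _ _ _ hγ]
  -- continuity
  have hFc : Continuous F := by
    apply Continuous.sumElim
    · exact (continuous_inl.comp continuous_subtype_val).prodMk continuous_const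
    · apply continuous_sigma
      intro a
      show Continuous fun x : DA a => ((tg a, Q a x) : (Z ⊕ OnePoint A) × (∀ γ, K γ))
      apply Continuous.prodMk continuous_const
      apply continuous_pi
      intro γ
      by_cases hγ : γ = a
      · subst hγ
        have : (fun x : DA γ => Q γ x γ) = g γ := by
          funext x; exact hQself γ x
        rw [this]; exact gc γ
      · have : (fun x : DA a => Q a x γ) = fun _ => m₀ γ := by
          funext x; exact hQother a x γ hγ
        rw [this]; exact continuous_const
  -- injectivity
  have hFinj : Function.Injective F := by
    rintro (z | ⟨a, x⟩) (z' | ⟨a', x'⟩) h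
    · have h1 := congrArg Prod.fst h
      simp only [hF, Sum.elim_inl] at h1
      exact congrArg Sum.inl (Subtype.ext (Sum.inl.inj h1))
    · have h1 := congrArg Prod.fst h
      simp only [hF, Sum.elim_inl, Sum.elim_inr] at h1
      exact absurd h1.symm (auxTag_ne_inl SZ j z.2 a')
    · have h1 := congrArg Prod.fst h
      simp only [hF, Sum.elim_inl, Sum.elim_inr] at h1
      exact absurd h1 (auxTag_ne_inl SZ j z'.2 a)
    · have h1 := congrArg Prod.fst h
      simp only [hF, Sum.elim_inr] at h1
      have haa : a = a' := auxTag_injective SZ j h1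
      subst haa
      have h2 := congrArg Prod.snd h
      simp only [hF, Sum.elim_inr] at h2
      have h3 : g a x = g a x' := by
        have h4 := congrFun h2 a
        rwa [hQself, hQself] at h4
      rw [(gb a).1 h3]
  -- closed range
  have hRcl : IsClosed (Set.range F) := by
    rw [← isOpen_compl_iff, isOpen_iff_forall_mem_open]
    rintro ⟨u, y⟩ huy
    rw [Set.mem_compl_iff] at huy
    by_cases hy : y = m₀
    · subst hy
      rcases auxTag_classify SZ j u with ⟨z, rfl⟩ | ⟨a, rfl⟩ | ⟨β, rfl, hβ⟩
      · exact absurd ⟨Sum.inl z, rfl⟩ huy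
      · refine absurd ⟨Sum.inr ⟨a, x₀ a⟩, ?_⟩ huy
        simp only [hF, Sum.elim_inr, hQx₀, htg]
      · refine ⟨{(Sum.inr (↑β : OnePoint A) : Z ⊕ OnePoint A)} ×ˢ Set.univ, ?_, ?_, ?_⟩
        · rintro ⟨v, w⟩ ⟨hv, -⟩ ⟨p, hp⟩
          rw [Set.mem_singleton_iff] at hv
          subst hv
          rcases p with z | ⟨a, x⟩
          · have h1 := congrArg Prod.fst hp
            simp only [hF, Sum.elim_inl] at h1
            exact Sum.inl_ne_inr h1
          · have h1 := congrArg Prod.fst hp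
            simp only [hF, Sum.elim_inr] at h1
            exact auxTag_ne_inr_coe SZ j hβ a h1
        · refine IsOpen.prod ?_ isOpen_univ
          have h2 : ({(Sum.inr (↑β : OnePoint A) : Z ⊕ OnePoint A)} : Set (Z ⊕ OnePoint A)) =
              Sum.inr '' ((fun x : A => (↑x : OnePoint A)) '' {β}) := by
            simp
          rw [h2]
          exact isOpenMap_inr _ (OnePoint.isOpenEmbedding_coe.isOpenMap _ (isOpen_discrete _))
        · exact ⟨rfl, Set.mem_univ _⟩
    · obtain ⟨γ₀, hγ₀⟩ := Function.ne_iff.mp hy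
      by_cases h1 : ∃ γ₁, γ₁ ≠ γ₀ ∧ y γ₁ ≠ m₀ γ₁
      · obtain ⟨γ₁, hne, hγ₁⟩ := h1
        refine ⟨Set.univ ×ˢ ({w : ∀ γ, K γ | w γ₀ ≠ m₀ γ₀} ∩ {w | w γ₁ ≠ m₀ γ₁}),
          ?_, ?_, ?_⟩
        · rintro ⟨v, w⟩ ⟨-, hw₀, hw₁⟩ ⟨p, hp⟩
          rcases p with z | ⟨a, x⟩
          · have h2 := congrArg Prod.snd hp
            simp only [hF, Sum.elim_inl] at h2
            exact hw₀ (congrFun h2 γ₀).symm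
          · have h2 := congrArg Prod.snd hp
            simp only [hF, Sum.elim_inr] at h2
            have ha₀ : γ₀ = a := by
              by_contra hc
              exact hw₀ ((congrFun h2 γ₀).symm.trans (hQother a x γ₀ hc))
            have ha₁ : γ₁ = a := by
              by_contra hc
              exact hw₁ ((congrFun h2 γ₁).symm.trans (hQother a x γ₁ hc))
            exact hne (ha₁.trans ha₀.symm)
        · refine IsOpen.prod isOpen_univ (IsOpen.inter ?_ ?_)
          · exact IsOpen.preimage (continuous_apply γ₀) isOpen_compl_singleton
          · exact IsOpen.preimage (continuous_apply γ₁) isOpen_compl_singleton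
        · exact ⟨Set.mem_univ _, hγ₀, hγ₁⟩
      · push_neg at h1
        obtain ⟨x, hx⟩ := (gb γ₀).2 (y γ₀)
        have hyQ : Q γ₀ x = y := by
          funext γ
          by_cases hγ : γ = γ₀
          · subst hγ; rw [hQself, hx]
          · rw [hQother _ _ _ hγ, (h1 γ hγ)]
        have hmem : ((tg γ₀, y) : (Z ⊕ OnePoint A) × (∀ γ, K γ)) ∈ Set.range F :=
          ⟨Sum.inr ⟨γ₀, x⟩, by simp only [hF, Sum.elim_inr, hyQ]⟩
        have hune : u ≠ tg γ₀ := by rintro rfl; exact huy hmem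
        refine ⟨{tg γ₀}ᶜ ×ˢ {w : ∀ γ, K γ | w γ₀ ≠ m₀ γ₀}, ?_, ?_, ?_⟩
        · rintro ⟨v, w⟩ ⟨hv, hw₀⟩ ⟨p, hp⟩
          rcases p with z | ⟨a, x'⟩
          · have h2 := congrArg Prod.snd hp
            simp only [hF, Sum.elim_inl] at h2
            exact hw₀ (congrFun h2 γ₀).symm
          · have h2 := congrArg Prod.snd hp
            simp only [hF, Sum.elim_inr] at h2
            have ha₀ : γ₀ = a := by
              by_contra hc
              exact hw₀ ((congrFun h2 γ₀).symm.trans (hQother a x' γ₀ hc))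
            subst ha₀
            have h3 := congrArg Prod.fst hp
            simp only [hF, Sum.elim_inr] at h3
            exact hv h3.symm
        · refine IsOpen.prod isOpen_compl_singleton ?_
          exact IsOpen.preimage (continuous_apply γ₀) isOpen_compl_singleton
        · exact ⟨hune, hγ₀⟩
  refine ⟨↥(Set.range F), inferInstance, ?_, inferInstance, Set.rangeFactorization F, ?_, ?_, ?_⟩
  · exact isCompact_iff_compactSpace.mp hRcl.isCompact
  · exact hFc.subtype_mk _
  · exact fun p q h => hFinj (congrArg Subtype.val h)
  · exact Set.rangeFactorization_surjective
/-- Transport of the condensation along the canonical homeomorphism between the complement of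
`S` in a sum `Z ⊕ Σ a, Xa a` and the disjoint sum of the complements. -/
theorem subcompact_sum_sigma_subtype {Z A : Type u} {Xa : A → Type u}
    [TopologicalSpace Z] [∀ a, TopologicalSpace (Xa a)]
    (S : Set (Z ⊕ (Σ a, Xa a)))
    (h : ∃ (W : Type u) (_ : TopologicalSpace W), CompactSpace W ∧ T2Space W ∧
      ∃ f : (↥({z : Z | Sum.inl z ∈ S}ᶜ) ⊕ (Σ a, ↥({x : Xa a | Sum.inr ⟨a, x⟩ ∈ S}ᶜ))) → W,
        Continuous f ∧ Function.Bijective f) :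
    Subcompact ↥(Sᶜ) := by
  classical
  set SZ : Set Z := {z : Z | Sum.inl z ∈ S} with hSZ
  set SA : ∀ a, Set (Xa a) := fun a => {x : Xa a | Sum.inr ⟨a, x⟩ ∈ S} with hSA
  set Φl : ↥(SZᶜ) → ↥(Sᶜ) := fun z => ⟨Sum.inl z.1, z.2⟩ with hΦl
  set Φr : (Σ a, ↥((SA a)ᶜ)) → ↥(Sᶜ) := fun q => ⟨Sum.inr ⟨q.1, q.2.1⟩, q.2.2⟩ with hΦr
  have hΦc : Continuous (Sum.elim Φl Φr) := by
    apply Continuous.sumElim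
    · exact (continuous_inl.comp continuous_subtype_val).subtype_mk _
    · apply continuous_sigma
      intro a
      exact (continuous_inr.comp (continuous_sigmaMk.comp continuous_subtype_val)).subtype_mk _
  have hΦb : Function.Bijective (Sum.elim Φl Φr) := by
    constructor
    · rintro (z | ⟨a, x⟩) (z' | ⟨a', x'⟩) h
      · have h' := congrArg Subtype.val h
        simp only [Sum.elim_inl, hΦl] at h'
        exact congrArg Sum.inl (Subtype.ext (Sum.inl.inj h'))
      · have h' := congrArg Subtype.val h
        simp only [Sum.elim_inl, Sum.elim_inr, hΦl, hΦr] at h'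
        exact absurd h' (by simp)
      · have h' := congrArg Subtype.val h
        simp only [Sum.elim_inl, Sum.elim_inr, hΦl, hΦr] at h'
        exact absurd h' (by simp)
      · have h' := congrArg Subtype.val h
        simp only [Sum.elim_inr, hΦr] at h'
        have h2 := Sum.inr.inj h'
        rw [Sigma.mk.inj_iff] at h2
        obtain ⟨rfl, h3⟩ := h2
        exact congrArg Sum.inr (congrArg (Sigma.mk a) (Subtype.ext (eq_of_heq h3)))
    · rintro ⟨(z | ⟨a, x⟩), hp⟩
      · exact ⟨Sum.inl ⟨z, hp⟩, rfl⟩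
      · exact ⟨Sum.inr ⟨a, ⟨x, hp⟩⟩, rfl⟩
  have hΦl_open : IsOpenMap Φl := by
    intro V hV
    obtain ⟨W, hW, rfl⟩ := isOpen_induced_iff.mp hV
    have himg : Φl '' (Subtype.val ⁻¹' W) = Subtype.val ⁻¹' (Sum.inl '' W) := by
      ext p
      simp only [Set.mem_image, Set.mem_preimage]
      constructor
      · rintro ⟨z, hz, rfl⟩
        exact ⟨z.1, hz, rfl⟩
      · rintro ⟨w, hw, hwp⟩
        exact ⟨⟨w, fun hc => p.2 (hwp ▸ hc)⟩, hw, Subtype.ext hwp⟩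
    rw [himg]
    exact (isOpenMap_inl W hW).preimage continuous_subtype_val
  have hΦr_open : IsOpenMap Φr := by
    intro V hV
    rw [isOpen_sigma_iff] at hV
    choose W hWo hWe using fun a => isOpen_induced_iff.mp (hV a)
    have hWtot : IsOpen {q : Σ a, Xa a | q.2 ∈ W q.1} := by
      rw [isOpen_sigma_iff]
      intro a
      exact hWo a
    have himg : Φr '' V = Subtype.val ⁻¹' (Sum.inr '' {q : Σ a, Xa a | q.2 ∈ W q.1}) := by
      ext p
      simp only [Set.mem_image, Set.mem_preimage]
      constructor
      · rintro ⟨⟨a, x⟩, hq, rfl⟩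
        refine ⟨⟨a, x.1⟩, ?_, rfl⟩
        have hx : x ∈ Subtype.val ⁻¹' W a := by rw [hWe a]; exact hq
        exact hx
      · rintro ⟨⟨a, w⟩, hw, hwp⟩
        have hnot : w ∈ (SA a)ᶜ := fun hc => p.2 (hwp ▸ hc)
        refine ⟨⟨a, ⟨w, hnot⟩⟩, ?_, Subtype.ext hwp⟩
        have hx : (⟨w, hnot⟩ : ↥((SA a)ᶜ)) ∈ Subtype.val ⁻¹' W a := hw
        rw [hWe a] at hx
        exact hx
    rw [himg]
    exact (isOpenMap_inr _ hWtot).preimage continuous_subtype_val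
  have hΦo : IsOpenMap (Sum.elim Φl Φr) := IsOpenMap.sumElim hΦl_open hΦr_open
  let e := Equiv.toHomeomorphOfContinuousOpen
    (Equiv.ofBijective (Sum.elim Φl Φr) hΦb) hΦc hΦo
  obtain ⟨Wsp, tW, hWc, hWt2, f, hfc, hfb⟩ := h
  exact ⟨Wsp, tW, hWc, hWt2, f ∘ e.symm, hfc.comp e.symm.continuous,
    hfb.comp e.symm.bijective⟩
/-- if `X = Z ⊕ (⊕_{α ∈ A} X_α)` with `#A = τ`, each `X_α` an `a_τ`-space of
cardinality `> τ` and `Z` compact Hausdorff, then `X` is almost `a_τ`-subcompact. -/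
theorem stmt_5 (τ : Cardinal.{u}) (hτ : ℵ₀ ≤ τ)
    (A : Type u) (hA : #A = τ)
    (Z : Type u) [TopologicalSpace Z] [CompactSpace Z] [T2Space Z]
    (Xa : A → Type u) [∀ a, TopologicalSpace (Xa a)]
    (haspace : ∀ a, ATauSpace τ (Xa a)) (hbig : ∀ a, τ < #(Xa a)) :
    ∀ S : Set (Z ⊕ (Σ a, Xa a)), #S ≤ τ → Subcompact ↥(Sᶜ) := by
  intro S hS
  classical
  -- cardinality of the trace of `S` on `Z`
  have hSZc : #(↥{z : Z | Sum.inl z ∈ S}) ≤ τ := by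
    refine le_trans (Cardinal.mk_le_of_injective
      (f := fun z : ↥{z : Z | Sum.inl z ∈ S} => (⟨Sum.inl z.1, z.2⟩ : ↥S)) ?_) hS
    intro z z' h
    exact Subtype.ext (Sum.inl.inj (congrArg Subtype.val h))
  -- cardinality of the traces of `S` on the summands
  have hSAc : ∀ a, #(↥{x : Xa a | Sum.inr ⟨a, x⟩ ∈ S}) ≤ τ := by
    intro a
    refine le_trans (Cardinal.mk_le_of_injective
      (f := fun x : ↥{x : Xa a | Sum.inr ⟨a, x⟩ ∈ S} => (⟨Sum.inr ⟨a, x.1⟩, by exact x.2⟩ : ↥S)) ?_) hS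
    intro x x' h
    have h2 := Sum.inr.inj (congrArg Subtype.val h)
    rw [Sigma.mk.inj_iff] at h2
    exact Subtype.ext (eq_of_heq h2.2)
  -- condensations of the complements in the summands
  have hsub : ∀ a, Subcompact ↥({x : Xa a | Sum.inr ⟨a, x⟩ ∈ S}ᶜ) := fun a =>
    (haspace a).2.2 _ (hSAc a)
  simp only [Subcompact] at hsub
  choose K tK hcomp ht2 g gc gb using hsub
  letI : ∀ a, TopologicalSpace (K a) := tK
  haveI : ∀ a, CompactSpace (K a) := hcomp
  haveI : ∀ a, T2Space (K a) := ht2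
  -- each complement is nonempty since `#(Xa a) > τ`
  have hne : ∀ a, Nonempty ↥({x : Xa a | Sum.inr ⟨a, x⟩ ∈ S}ᶜ) := by
    intro a
    rcases Set.eq_empty_or_nonempty ({x : Xa a | Sum.inr ⟨a, x⟩ ∈ S}ᶜ) with hemp | hnon
    · exfalso
      have h2 : {x : Xa a | Sum.inr ⟨a, x⟩ ∈ S} = Set.univ := by
        rwa [Set.compl_empty_iff] at hemp
      have h3 : #(Xa a) ≤ τ := by
        calc #(Xa a) = #(↥{x : Xa a | Sum.inr ⟨a, x⟩ ∈ S}) := by rw [h2, Cardinal.mk_univ]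
          _ ≤ τ := hSAc a
      exact absurd h3 (not_le.mpr (hbig a))
    · exact hnon.to_subtype
  -- embedding of `SZ ⊕ PUnit` into `A`
  have hj : Nonempty ((↥{z : Z | Sum.inl z ∈ S} ⊕ PUnit.{u+1}) ↪ A) := by
    rw [← Cardinal.le_def]
    have h2 : #(↥{z : Z | Sum.inl z ∈ S} ⊕ PUnit.{u+1}) =
        #(↥{z : Z | Sum.inl z ∈ S}) + 1 := by
      simp [Cardinal.mk_sum, Cardinal.mk_punit]
    rw [h2, hA]
    calc #(↥{z : Z | Sum.inl z ∈ S}) + 1 ≤ τ + 1 := add_le_add_left hSZc 1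
      _ = τ := Cardinal.add_one_eq hτ
  -- assemble
  exact subcompact_sum_sigma_subtype S
    (aux_condense {z : Z | Sum.inl z ∈ S} (fun a => ↥({x : Xa a | Sum.inr ⟨a, x⟩ ∈ S}ᶜ))
      K g gc gb (fun a => (hne a).some) hj.some)
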